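/- Let Ω ⊆ ℝ³ be open and let Φ : Ω → ℝ be C³ with positive definite Hessian at every point. Write Φ_{ijk} for the third partial derivatives and Φ^{pq} for the entries of the inverse Hessian matrix. Then Φ satisfies the WDVV equations — i.e. Σ_{p,q} Φ^{pq} Φ_{jlp} Φ_{ikq} = Σ_{p,q} Φ^{pq} Φ_{ilp} Φ_{jkq} for all indices i,j,k,l ∈ {1,2,3} at every point of Ω — if and only if Φ satisfies the six equations (indexed by pairs i ≤ k in {1,2,3}) Σ_{j,l,p,q} Φ^{jl} Φ^{pq} Φ_{jlp} Φ_{ikq} = Σ_{j,l,p,q} Φ^{jl} Φ^{pq} Φ_{ilp} Φ_{jkq} at every point of Ω. -/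

import Mathlib

open Real Matrix

/-- Partial derivative of `f : ℝⁿ → ℝ` in the `i`-th coordinate direction. -/
noncomputable def pd {n : ℕ} (i : Fin n) (f : (Fin n → ℝ) → ℝ) : (Fin n → ℝ) → ℝ :=
  fun x => fderiv ℝ f x (Pi.single i 1)

/-- Hessian matrix of second partial derivatives of `f : ℝⁿ → ℝ`. -/
noncomputable def hessian {n : ℕ} (f : (Fin n → ℝ) → ℝ) (x : Fin n → ℝ) :
    Matrix (Fin n) (Fin n) ℝ :=
  Matrix.of fun i j => pd i (pd j f) x

/-- Third partial derivatives `Φ_{ijk}` of `f : ℝⁿ → ℝ`. -/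
noncomputable def pd3 {n : ℕ} (f : (Fin n → ℝ) → ℝ) (i j k : Fin n) (x : Fin n → ℝ) : ℝ :=
  pd i (pd j (pd k f)) x


lemma pd_pd_eq {n : ℕ} (f : (Fin n → ℝ) → ℝ) (x : Fin n → ℝ) (hf : ContDiffAt ℝ 2 f x)
    (i j : Fin n) :
    pd i (pd j f) x = fderiv ℝ (fderiv ℝ f) x (Pi.single i 1) (Pi.single j 1) := by
  have hdiff : DifferentiableAt ℝ (fderiv ℝ f) x :=
    (hf.fderiv_right (m := 1) (by norm_num)).differentiableAt one_ne_zero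
  have h2 : HasFDerivAt (fun y => fderiv ℝ f y (Pi.single j 1))
      (((fderiv ℝ f x).comp (0 : (Fin n → ℝ) →L[ℝ] (Fin n → ℝ))) +
        ((fderiv ℝ (fderiv ℝ f) x).flip (Pi.single j 1))) x :=
    hdiff.hasFDerivAt.clm_apply (hasFDerivAt_const _ _)
  unfold pd
  rw [h2.fderiv]
  simp

lemma pd_comm {n : ℕ} (f : (Fin n → ℝ) → ℝ) (x : Fin n → ℝ) (hf : ContDiffAt ℝ 2 f x)
    (i j : Fin n) : pd i (pd j f) x = pd j (pd i f) x := by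
  rw [pd_pd_eq f x hf i j, pd_pd_eq f x hf j i]
  exact (hf.isSymmSndFDerivAt (by simp [minSmoothness_of_isRCLikeNormedField])) _ _

theorem ricci6 (A00 A01 A02 A11 A12 A22 r1 r2 r3 r4 r5 r6 : ℝ)
    (hd : -A02*A02*A11 + 2*A01*A02*A12 - A01*A01*A22 - A00*A12*A12 + A00*A11*A22 ≠ 0)
    (e1 : (A11) * r1 + (2*A12) * r2 + (A22) * r4 = 0)
    (e2 : (-A01) * r1 + (-A02) * r2 + (A12) * r3 + (A22) * r5 = 0)
    (e3 : (-A01) * r2 + (-A11) * r3 + (-A02) * r4 + (-A12) * r5 = 0)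
    (e4 : (A00) * r1 + (-2*A02) * r3 + (A22) * r6 = 0)
    (e5 : (A00) * r2 + (A01) * r3 + (-A02) * r5 + (-A12) * r6 = 0)
    (e6 : (A00) * r4 + (2*A01) * r5 + (A11) * r6 = 0)
    : r1 = 0 ∧ r2 = 0 ∧ r3 = 0 ∧ r4 = 0 ∧ r5 = 0 ∧ r6 = 0 := by
  have hD2 : (-2 : ℝ) * (-A02*A02*A11 + 2*A01*A02*A12 - A01*A01*A22 - A00*A12*A12 + A00*A11*A22) ^ 2 ≠ 0 := mul_ne_zero (by norm_num) (pow_ne_zero 2 hd)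
  have z1 : r1 = 0 := by
    have hm : ((-2 : ℝ) * (-A02*A02*A11 + 2*A01*A02*A12 - A01*A01*A22 - A00*A12*A12 + A00*A11*A22) ^ 2) * r1 = 0 := by
      linear_combination (-2*A02*A02*A02*A02*A11 + 4*A01*A02*A02*A02*A12 - 2*A01*A01*A02*A02*A22 - 2*A00*A02*A02*A12*A12 + 3*A00*A02*A02*A11*A22 - 2*A00*A01*A02*A12*A22 + A00*A01*A01*A22*A22 + A00*A00*A12*A12*A22 - A00*A00*A11*A22*A22) * e1 + (-4*A02*A02*A02*A11*A12 + 8*A01*A02*A02*A12*A12 + 2*A01*A02*A02*A11*A22 - 8*A01*A01*A02*A12*A22 + 2*A01*A01*A01*A22*A22 - 4*A00*A02*A12*A12*A12 + 4*A00*A02*A11*A12*A22 + 2*A00*A01*A12*A12*A22 - 2*A00*A01*A11*A22*A22) * e2 + (-2*A02*A02*A02*A11*A22 + 4*A01*A02*A02*A12*A22 - 2*A01*A01*A02*A22*A22 - 2*A00*A02*A12*A12*A22 + 2*A00*A02*A11*A22*A22) * e3 + (-2*A02*A02*A11*A12*A12 + A02*A02*A11*A11*A22 + 4*A01*A02*A12*A12*A12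 - 2*A01*A02*A11*A12*A22 - 2*A01*A01*A12*A12*A22 + A01*A01*A11*A22*A22 - 2*A00*A12*A12*A12*A12 + 3*A00*A11*A12*A12*A22 - A00*A11*A11*A22*A22) * e4 + (-2*A02*A02*A11*A12*A22 + 4*A01*A02*A12*A12*A22 - 2*A01*A01*A12*A22*A22 - 2*A00*A12*A12*A12*A22 + 2*A00*A11*A12*A22*A22) * e5 + (-A02*A02*A11*A22*A22 + 2*A01*A02*A12*A22*A22 - A01*A01*A22*A22*A22 - A00*A12*A12*A22*A22 + A00*A11*A22*A22*A22) * e6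
    exact (mul_eq_zero.mp hm).resolve_left hD2
  have z2 : r2 = 0 := by
    have hm : ((-2 : ℝ) * (-A02*A02*A11 + 2*A01*A02*A12 - A01*A01*A22 - A00*A12*A12 + A00*A11*A22) ^ 2) * r2 = 0 := by
      linear_combination (2*A01*A02*A02*A02*A11 - 4*A01*A01*A02*A02*A12 + 2*A01*A01*A01*A02*A22 - A00*A02*A02*A11*A12 + 4*A00*A01*A02*A12*A12 - 2*A00*A01*A02*A11*A22 - A00*A01*A01*A12*A22 - A00*A00*A12*A12*A12 + A00*A00*A11*A12*A22) * e1 + (2*A02*A02*A02*A11*A11 - 4*A01*A02*A02*A11*A12 + 2*A01*A01*A02*A11*A22 + 2*A00*A02*A11*A12*A12 - 2*A00*A02*A11*A11*A22) * e2 + (2*A01*A02*A02*A11*A22 - 4*A01*A01*A02*A12*A22 + 2*A01*A01*A01*A22*A22 + 2*A00*A01*A12*A12*A22 - 2*A00*A01*A11*A22*A22) * e3 + (A02*A02*A11*A11*A12 - 2*A01*A02*A11*A12*A12 + A01*A01*A11*A12*A22 + A00*A11*A12*A12*A12 - A00*A11*A11*A12*A22) * e4 + (2*A02*A02*A11*A11*A22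 - 4*A01*A02*A11*A12*A22 + 2*A01*A01*A11*A22*A22 + 2*A00*A11*A12*A12*A22 - 2*A00*A11*A11*A22*A22) * e5 + (A02*A02*A11*A12*A22 - 2*A01*A02*A12*A12*A22 + A01*A01*A12*A22*A22 + A00*A12*A12*A12*A22 - A00*A11*A12*A22*A22) * e6
    exact (mul_eq_zero.mp hm).resolve_left hD2
  have z3 : r3 = 0 := by
    have hm : ((-2 : ℝ) * (-A02*A02*A11 + 2*A01*A02*A12 - A01*A01*A22 - A00*A12*A12 + A00*A11*A22) ^ 2) * r3 = 0 := by
      linear_combination (-A00*A02*A02*A02*A11 + 2*A00*A01*A02*A02*A12 - A00*A01*A01*A02*A22 - A00*A00*A02*A12*A12 + A00*A00*A02*A11*A22) * e1 + (-2*A00*A02*A02*A11*A12 + 4*A00*A01*A02*A12*A12 - 2*A00*A01*A01*A12*A22 - 2*A00*A00*A12*A12*A12 + 2*A00*A00*A11*A12*A22) * e2 + (-2*A00*A02*A02*A11*A22 + 4*A00*A01*A02*A12*A22 - 2*A00*A01*A01*A22*A22 - 2*A00*A00*A12*A12*A22 + 2*A00*A00*A11*A22*A22) * e3 + (A02*A02*A02*A11*A11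 - 4*A01*A02*A02*A11*A12 + 4*A01*A01*A02*A12*A12 + A01*A01*A02*A11*A22 - 2*A01*A01*A01*A12*A22 + A00*A02*A11*A12*A12 - A00*A02*A11*A11*A22 - 2*A00*A01*A12*A12*A12 + 2*A00*A01*A11*A12*A22) * e4 + (-2*A01*A02*A02*A11*A22 + 4*A01*A01*A02*A12*A22 - 2*A01*A01*A01*A22*A22 - 2*A00*A01*A12*A12*A22 + 2*A00*A01*A11*A22*A22) * e5 + (-A02*A02*A02*A11*A22 + 2*A01*A02*A02*A12*A22 - A01*A01*A02*A22*A22 - A00*A02*A12*A12*A22 + A00*A02*A11*A22*A22) * e6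
    exact (mul_eq_zero.mp hm).resolve_left hD2
  have z4 : r4 = 0 := by
    have hm : ((-2 : ℝ) * (-A02*A02*A11 + 2*A01*A02*A12 - A01*A01*A22 - A00*A12*A12 + A00*A11*A22) ^ 2) * r4 = 0 := by
      linear_combination (-2*A01*A01*A02*A02*A11 + 4*A01*A01*A01*A02*A12 - 2*A01*A01*A01*A01*A22 + A00*A02*A02*A11*A11 - 2*A00*A01*A02*A11*A12 - 2*A00*A01*A01*A12*A12 + 3*A00*A01*A01*A11*A22 + A00*A00*A11*A12*A12 - A00*A00*A11*A11*A22) * e1 + (-2*A01*A02*A02*A11*A11 + 4*A01*A01*A02*A11*A12 - 2*A01*A01*A01*A11*A22 - 2*A00*A01*A11*A12*A12 + 2*A00*A01*A11*A11*A22) * e2 + (2*A02*A02*A02*A11*A11 - 8*A01*A02*A02*A11*A12 + 8*A01*A01*A02*A12*A12 + 2*A01*A01*A02*A11*A22 - 4*A01*A01*A01*A12*A22 + 2*A00*A02*A11*A12*A12 - 2*A00*A02*A11*A11*A22 - 4*A00*A01*A12*A12*A12 + 4*A00*A01*A11*A12*A22) * e3 + (-A02*A02*A11*A11*A11 + 2*A01*A02*A11*A11*A12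 - A01*A01*A11*A11*A22 - A00*A11*A11*A12*A12 + A00*A11*A11*A11*A22) * e4 + (-2*A02*A02*A11*A11*A12 + 4*A01*A02*A11*A12*A12 - 2*A01*A01*A11*A12*A22 - 2*A00*A11*A12*A12*A12 + 2*A00*A11*A11*A12*A22) * e5 + (-2*A02*A02*A11*A12*A12 + A02*A02*A11*A11*A22 + 4*A01*A02*A12*A12*A12 - 2*A01*A02*A11*A12*A22 - 2*A01*A01*A12*A12*A22 + A01*A01*A11*A22*A22 - 2*A00*A12*A12*A12*A12 + 3*A00*A11*A12*A12*A22 - A00*A11*A11*A22*A22) * e6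
    exact (mul_eq_zero.mp hm).resolve_left hD2
  have z5 : r5 = 0 := by
    have hm : ((-2 : ℝ) * (-A02*A02*A11 + 2*A01*A02*A12 - A01*A01*A22 - A00*A12*A12 + A00*A11*A22) ^ 2) * r5 = 0 := by
      linear_combination (A00*A01*A02*A02*A11 - 2*A00*A01*A01*A02*A12 + A00*A01*A01*A01*A22 + A00*A00*A01*A12*A12 - A00*A00*A01*A11*A22) * e1 + (2*A00*A02*A02*A11*A11 - 4*A00*A01*A02*A11*A12 + 2*A00*A01*A01*A11*A22 + 2*A00*A00*A11*A12*A12 - 2*A00*A00*A11*A11*A22) * e2 + (2*A00*A02*A02*A11*A12 - 4*A00*A01*A02*A12*A12 + 2*A00*A01*A01*A12*A22 + 2*A00*A00*A12*A12*A12 - 2*A00*A00*A11*A12*A22) * e3 + (A01*A02*A02*A11*A11 - 2*A01*A01*A02*A11*A12 + A01*A01*A01*A11*A22 + A00*A01*A11*A12*A12 - A00*A01*A11*A11*A22) * e4 + (2*A02*A02*A02*A11*A11 - 4*A01*A02*A02*A11*A12 + 2*A01*A01*A02*A11*A22 + 2*A00*A02*A11*A12*A12 - 2*A00*A02*A11*A11*A22)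 * e5 + (2*A02*A02*A02*A11*A12 - 4*A01*A02*A02*A12*A12 - A01*A02*A02*A11*A22 + 4*A01*A01*A02*A12*A22 - A01*A01*A01*A22*A22 + 2*A00*A02*A12*A12*A12 - 2*A00*A02*A11*A12*A22 - A00*A01*A12*A12*A22 + A00*A01*A11*A22*A22) * e6
    exact (mul_eq_zero.mp hm).resolve_left hD2
  have z6 : r6 = 0 := by
    have hm : ((-2 : ℝ) * (-A02*A02*A11 + 2*A01*A02*A12 - A01*A01*A22 - A00*A12*A12 + A00*A11*A22) ^ 2) * r6 = 0 := by
      linear_combination (-A00*A00*A02*A02*A11 + 2*A00*A00*A01*A02*A12 - A00*A00*A01*A01*A22 - A00*A00*A00*A12*A12 + A00*A00*A00*A11*A22) * e1 + (-2*A00*A01*A02*A02*A11 + 4*A00*A01*A01*A02*A12 - 2*A00*A01*A01*A01*A22 - 2*A00*A00*A01*A12*A12 + 2*A00*A00*A01*A11*A22) * e2 + (-2*A00*A02*A02*A02*A11 + 4*A00*A01*A02*A02*A12 - 2*A00*A01*A01*A02*A22 - 2*A00*A00*A02*A12*A12 + 2*A00*A00*A02*A11*A22) * e3 + (-2*A01*A01*A02*A02*A11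 + 4*A01*A01*A01*A02*A12 - 2*A01*A01*A01*A01*A22 + A00*A02*A02*A11*A11 - 2*A00*A01*A02*A11*A12 - 2*A00*A01*A01*A12*A12 + 3*A00*A01*A01*A11*A22 + A00*A00*A11*A12*A12 - A00*A00*A11*A11*A22) * e4 + (-4*A01*A02*A02*A02*A11 + 8*A01*A01*A02*A02*A12 - 4*A01*A01*A01*A02*A22 + 2*A00*A02*A02*A11*A12 - 8*A00*A01*A02*A12*A12 + 4*A00*A01*A02*A11*A22 + 2*A00*A01*A01*A12*A22 + 2*A00*A00*A12*A12*A12 - 2*A00*A00*A11*A12*A22) * e5 + (-2*A02*A02*A02*A02*A11 + 4*A01*A02*A02*A02*A12 - 2*A01*A01*A02*A02*A22 - 2*A00*A02*A02*A12*A12 + 3*A00*A02*A02*A11*A22 - 2*A00*A01*A02*A12*A22 + A00*A01*A01*A22*A22 + A00*A00*A12*A12*A22 - A00*A00*A11*A22*A22) * e6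
    exact (mul_eq_zero.mp hm).resolve_left hD2
  exact ⟨z1, z2, z3, z4, z5, z6⟩

noncomputable def Lq (a : Matrix (Fin 3) (Fin 3) ℝ) (c : Fin 3 → Fin 3 → Fin 3 → ℝ)
    (i j k l : Fin 3) : ℝ :=
  ∑ p : Fin 3, ∑ q : Fin 3, a p q * c j l p * c i k q

noncomputable def Rq (a : Matrix (Fin 3) (Fin 3) ℝ) (c : Fin 3 → Fin 3 → Fin 3 → ℝ)
    (i j k l : Fin 3) : ℝ :=
  Lq a c i j k l - Lq a c j i k l

lemma Lq_pair (a : Matrix (Fin 3) (Fin 3) ℝ) (c : Fin 3 → Fin 3 → Fin 3 → ℝ)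
    (hc1 : ∀ i j k, c i j k = c j i k) (i j k l : Fin 3) :
    Lq a c k l i j = Lq a c i j k l := by
  refine Finset.sum_congr rfl fun p _ => Finset.sum_congr rfl fun q _ => ?_
  rw [hc1 l j p, hc1 k i q]

lemma Lq_swap (a : Matrix (Fin 3) (Fin 3) ℝ) (c : Fin 3 → Fin 3 → Fin 3 → ℝ)
    (ha : ∀ p q, a p q = a q p) (i j k l : Fin 3) :
    Lq a c i j l k = Lq a c j i k l := by
  show (∑ p : Fin 3, ∑ q : Fin 3, a p q * c j k p * c i l q) = _
  rw [Finset.sum_comm]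
  refine Finset.sum_congr rfl fun p _ => Finset.sum_congr rfl fun q _ => ?_
  rw [ha q p]; ring

lemma Rq_pair (a : Matrix (Fin 3) (Fin 3) ℝ) (c : Fin 3 → Fin 3 → Fin 3 → ℝ)
    (ha : ∀ p q, a p q = a q p) (hc1 : ∀ i j k, c i j k = c j i k) (i j k l : Fin 3) :
    Rq a c i j k l = Rq a c k l i j := by
  have h1 := Lq_pair a c hc1 i j k l
  have h2 := Lq_pair a c hc1 i j l k
  have h3 := Lq_swap a c ha i j k l
  unfold Rq
  linarith

lemma Rq_anti1 (a : Matrix (Fin 3) (Fin 3) ℝ) (c : Fin 3 → Fin 3 → Fin 3 → ℝ)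
    (i j k l : Fin 3) : Rq a c i j k l = - Rq a c j i k l := by
  unfold Rq; ring

lemma Rq_anti2 (a : Matrix (Fin 3) (Fin 3) ℝ) (c : Fin 3 → Fin 3 → Fin 3 → ℝ)
    (ha : ∀ p q, a p q = a q p) (i j k l : Fin 3) :
    Rq a c i j k l = - Rq a c i j l k := by
  have h1 := Lq_swap a c ha i j k l
  have h2 := Lq_swap a c ha j i k l
  unfold Rq
  linarith

lemma Rq_diag2 (a : Matrix (Fin 3) (Fin 3) ℝ) (c : Fin 3 → Fin 3 → Fin 3 → ℝ)
    (ha : ∀ p q, a p q = a q p) (i j k : Fin 3) : Rq a c i j k k = 0 := by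
  have h := Lq_swap a c ha i j k k
  unfold Rq
  linarith

set_option maxHeartbeats 1600000 in
theorem wdvv_of_ricci (a : Matrix (Fin 3) (Fin 3) ℝ) (c : Fin 3 → Fin 3 → Fin 3 → ℝ)
    (ha : ∀ p q, a p q = a q p)
    (hc1 : ∀ i j k, c i j k = c j i k) (hc2 : ∀ i j k, c i j k = c i k j)
    (hd : -(a 0 2)*(a 0 2)*(a 1 1) + 2*(a 0 1)*(a 0 2)*(a 1 2) - (a 0 1)*(a 0 1)*(a 2 2) - (a 0 0)*(a 1 2)*(a 1 2) + (a 0 0)*(a 1 1)*(a 2 2) ≠ 0)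
    (hcon : ∀ i k : Fin 3, i ≤ k →
        ∑ j : Fin 3, ∑ l : Fin 3, ∑ p : Fin 3, ∑ q : Fin 3,
          a j l * a p q * c j l p * c i k q =
        ∑ j : Fin 3, ∑ l : Fin 3, ∑ p : Fin 3, ∑ q : Fin 3,
          a j l * a p q * c i l p * c j k q) :
    ∀ i j k l : Fin 3,
      ∑ p : Fin 3, ∑ q : Fin 3, a p q * c j l p * c i k q =
      ∑ p : Fin 3, ∑ q : Fin 3, a p q * c i l p * c j k q := by
  have cs010 : c 0 1 0 = c 0 0 1 := by rw [hc2 0 1 0]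
  have cs020 : c 0 2 0 = c 0 0 2 := by rw [hc2 0 2 0]
  have cs021 : c 0 2 1 = c 0 1 2 := by rw [hc2 0 2 1]
  have cs100 : c 1 0 0 = c 0 0 1 := by rw [hc1 1 0 0, hc2 0 1 0]
  have cs101 : c 1 0 1 = c 0 1 1 := by rw [hc1 1 0 1]
  have cs102 : c 1 0 2 = c 0 1 2 := by rw [hc1 1 0 2]
  have cs110 : c 1 1 0 = c 0 1 1 := by rw [hc2 1 1 0, hc1 1 0 1]
  have cs120 : c 1 2 0 = c 0 1 2 := by rw [hc2 1 2 0, hc1 1 0 2]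
  have cs121 : c 1 2 1 = c 1 1 2 := by rw [hc2 1 2 1]
  have cs200 : c 2 0 0 = c 0 0 2 := by rw [hc1 2 0 0, hc2 0 2 0]
  have cs201 : c 2 0 1 = c 0 1 2 := by rw [hc1 2 0 1, hc2 0 2 1]
  have cs202 : c 2 0 2 = c 0 2 2 := by rw [hc1 2 0 2]
  have cs210 : c 2 1 0 = c 0 1 2 := by rw [hc1 2 1 0, hc2 1 2 0, hc1 1 0 2]
  have cs211 : c 2 1 1 = c 1 1 2 := by rw [hc1 2 1 1, hc2 1 2 1]
  have cs212 : c 2 1 2 = c 1 2 2 := by rw [hc1 2 1 2]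
  have cs220 : c 2 2 0 = c 0 2 2 := by rw [hc2 2 2 0, hc1 2 0 2]
  have cs221 : c 2 2 1 = c 1 2 2 := by rw [hc2 2 2 1, hc1 2 1 2]
  have as10 : a 1 0 = a 0 1 := ha 1 0
  have as20 : a 2 0 = a 0 2 := ha 2 0
  have as21 : a 2 1 = a 1 2 := ha 2 1
  have E1 : ((a 1 1)) * (Rq a c 0 1 0 1) + (2*(a 1 2)) * (Rq a c 0 1 0 2) + ((a 2 2)) * (Rq a c 0 2 0 2) = 0 := by
    have h := hcon 0 0 (by decide)
    simp only [Fin.sum_univ_three] at h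
    simp only [Rq, Lq, Fin.sum_univ_three]
    simp only [as10, as20, as21, cs010, cs020, cs021, cs100, cs101, cs102, cs110, cs120, cs121, cs200, cs201, cs202, cs210, cs211, cs212, cs220, cs221] at h ⊢
    linear_combination h
  have E2 : (-(a 0 1)) * (Rq a c 0 1 0 1) + (-(a 0 2)) * (Rq a c 0 1 0 2) + ((a 1 2)) * (Rq a c 0 1 1 2) + ((a 2 2)) * (Rq a c 0 2 1 2) = 0 := by
    have h := hcon 0 1 (by decide)
    simp only [Fin.sum_univ_three] at h
    simp only [Rq, Lq, Fin.sum_univ_three]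
    simp only [as10, as20, as21, cs010, cs020, cs021, cs100, cs101, cs102, cs110, cs120, cs121, cs200, cs201, cs202, cs210, cs211, cs212, cs220, cs221] at h ⊢
    linear_combination h
  have E3 : (-(a 0 1)) * (Rq a c 0 1 0 2) + (-(a 1 1)) * (Rq a c 0 1 1 2) + (-(a 0 2)) * (Rq a c 0 2 0 2) + (-(a 1 2)) * (Rq a c 0 2 1 2) = 0 := by
    have h := hcon 0 2 (by decide)
    simp only [Fin.sum_univ_three] at h
    simp only [Rq, Lq, Fin.sum_univ_three]
    simp only [as10, as20, as21, cs010, cs020, cs021, cs100, cs101, cs102, cs110, cs120, cs121, cs200, cs201, cs202, cs210, cs211, cs212, cs220, cs221] at h ⊢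
    linear_combination h
  have E4 : ((a 0 0)) * (Rq a c 0 1 0 1) + (-2*(a 0 2)) * (Rq a c 0 1 1 2) + ((a 2 2)) * (Rq a c 1 2 1 2) = 0 := by
    have h := hcon 1 1 (by decide)
    simp only [Fin.sum_univ_three] at h
    simp only [Rq, Lq, Fin.sum_univ_three]
    simp only [as10, as20, as21, cs010, cs020, cs021, cs100, cs101, cs102, cs110, cs120, cs121, cs200, cs201, cs202, cs210, cs211, cs212, cs220, cs221] at h ⊢
    linear_combination h
  have E5 : ((a 0 0)) * (Rq a c 0 1 0 2) + ((a 0 1)) * (Rq a c 0 1 1 2) + (-(a 0 2)) * (Rq a c 0 2 1 2) + (-(a 1 2)) * (Rq a c 1 2 1 2) = 0 := by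
    have h := hcon 1 2 (by decide)
    simp only [Fin.sum_univ_three] at h
    simp only [Rq, Lq, Fin.sum_univ_three]
    simp only [as10, as20, as21, cs010, cs020, cs021, cs100, cs101, cs102, cs110, cs120, cs121, cs200, cs201, cs202, cs210, cs211, cs212, cs220, cs221] at h ⊢
    linear_combination h
  have E6 : ((a 0 0)) * (Rq a c 0 2 0 2) + (2*(a 0 1)) * (Rq a c 0 2 1 2) + ((a 1 1)) * (Rq a c 1 2 1 2) = 0 := by
    have h := hcon 2 2 (by decide)
    simp only [Fin.sum_univ_three] at h
    simp only [Rq, Lq, Fin.sum_univ_three]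
    simp only [as10, as20, as21, cs010, cs020, cs021, cs100, cs101, cs102, cs110, cs120, cs121, cs200, cs201, cs202, cs210, cs211, cs212, cs220, cs221] at h ⊢
    linear_combination h
  obtain ⟨z1, z2, z3, z4, z5, z6⟩ :=
    ricci6 (a 0 0) (a 0 1) (a 0 2) (a 1 1) (a 1 2) (a 2 2)
      (Rq a c 0 1 0 1) (Rq a c 0 1 0 2) (Rq a c 0 1 1 2)
      (Rq a c 0 2 0 2) (Rq a c 0 2 1 2) (Rq a c 1 2 1 2)
      hd E1 E2 E3 E4 E5 E6
  have w00 : Rq a c 0 1 0 1 = 0 := z1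
  have w01 : Rq a c 0 1 0 2 = 0 := z2
  have w02 : Rq a c 0 1 1 2 = 0 := z3
  have w10 : Rq a c 0 2 0 1 = 0 := by rw [Rq_pair a c ha hc1 0 2 0 1]; exact z2
  have w11 : Rq a c 0 2 0 2 = 0 := z4
  have w12 : Rq a c 0 2 1 2 = 0 := z5
  have w20 : Rq a c 1 2 0 1 = 0 := by rw [Rq_pair a c ha hc1 1 2 0 1]; exact z3
  have w21 : Rq a c 1 2 0 2 = 0 := by rw [Rq_pair a c ha hc1 1 2 0 2]; exact z5
  have w22 : Rq a c 1 2 1 2 = 0 := z6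
  have hlt : ∀ i j k l : Fin 3, i < j → k < l → Rq a c i j k l = 0 := by
    intro i j k l hij hkl
    fin_cases i <;> fin_cases j <;> fin_cases k <;> fin_cases l <;>
      first
        | exact absurd hij (by decide)
        | exact absurd hkl (by decide)
        | assumption
  have hle : ∀ i j k l : Fin 3, i < j → Rq a c i j k l = 0 := by
    intro i j k l hij
    rcases lt_trichotomy k l with h | h | h
    · exact hlt i j k l hij h
    · rw [h]; exact Rq_diag2 a c ha i j l
    · have h1 := hlt i j l k hij h
      have h2 := Rq_anti2 a c ha i j k l
      linarith
  have hzero : ∀ i j k l : Fin 3, Rq a c i j k l = 0 := by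
    intro i j k l
    rcases lt_trichotomy i j with h | h | h
    · exact hle i j k l h
    · rw [h]; exact sub_self _
    · have h1 := hle j i k l h
      have h2 := Rq_anti1 a c i j k l
      linarith
  intro i j k l
  have h := hzero i j k l
  simp only [Rq, Lq] at h
  linarith

/-- In dimension three, a convex potential satisfies the WDVV equations if and only if
it satisfies the six contracted (Ricci) equations indexed by pairs `i ≤ k`. -/
theorem wdvv_dim3_iff_ricci (Ω : Set (Fin 3 → ℝ)) (hΩ : IsOpen Ω)
    (Φ : (Fin 3 → ℝ) → ℝ) (hC3 : ContDiffOn ℝ 3 Φ Ω)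
    (hpos : ∀ x ∈ Ω, (hessian Φ x).PosDef) :
    (∀ x ∈ Ω, ∀ i j k l : Fin 3,
        ∑ p : Fin 3, ∑ q : Fin 3,
          (hessian Φ x)⁻¹ p q * pd3 Φ j l p x * pd3 Φ i k q x =
        ∑ p : Fin 3, ∑ q : Fin 3,
          (hessian Φ x)⁻¹ p q * pd3 Φ i l p x * pd3 Φ j k q x) ↔
    (∀ x ∈ Ω, ∀ i k : Fin 3, i ≤ k →
        ∑ j : Fin 3, ∑ l : Fin 3, ∑ p : Fin 3, ∑ q : Fin 3,
          (hessian Φ x)⁻¹ j l * (hessian Φ x)⁻¹ p q *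
            pd3 Φ j l p x * pd3 Φ i k q x =
        ∑ j : Fin 3, ∑ l : Fin 3, ∑ p : Fin 3, ∑ q : Fin 3,
          (hessian Φ x)⁻¹ j l * (hessian Φ x)⁻¹ p q *
            pd3 Φ i l p x * pd3 Φ j k q x) := by
  constructor
  · intro hW x hx i k _
    refine Finset.sum_congr rfl fun j _ => Finset.sum_congr rfl fun l _ => ?_
    have h2 := hW x hx i j k l
    simp only [Fin.sum_univ_three] at h2 ⊢
    linear_combination ((hessian Φ x)⁻¹ j l) * h2
  · intro hcon x hx i j k l
    have hH := hpos x hx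
    have hherm : ((hessian Φ x)⁻¹).IsHermitian := hH.1.inv
    have ha : ∀ p q, (hessian Φ x)⁻¹ p q = (hessian Φ x)⁻¹ q p := fun p q => by
      simpa using hherm.apply q p
    have hc1 : ∀ i j k : Fin 3, pd3 Φ i j k x = pd3 Φ j i k x := by
      intro i j k
      have h3 : ContDiffAt ℝ 3 Φ x := hC3.contDiffAt (hΩ.mem_nhds hx)
      have hk : ContDiffAt ℝ 2 (pd (n := 3) k Φ) x := by
        have hf := h3.fderiv_right (m := 2) (by norm_num)
        exact hf.clm_apply contDiffAt_const
      exact pd_comm _ x hk i j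
    have hc2 : ∀ i j k : Fin 3, pd3 Φ i j k x = pd3 Φ i k j x := by
      intro i j k
      have heq : pd j (pd k Φ) =ᶠ[nhds x] pd k (pd j Φ) := by
        filter_upwards [hΩ.mem_nhds hx] with y hy
        exact pd_comm Φ y ((hC3.contDiffAt (hΩ.mem_nhds hy)).of_le (by norm_num)) j k
      have h5 : fderiv ℝ (pd j (pd k Φ)) x = fderiv ℝ (pd k (pd j Φ)) x := heq.fderiv_eq
      show fderiv ℝ (pd j (pd k Φ)) x (Pi.single i 1) =
        fderiv ℝ (pd k (pd j Φ)) x (Pi.single i 1)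
      rw [h5]
    have hdet : ((hessian Φ x)⁻¹).det ≠ 0 := by
      rw [Matrix.det_nonsing_inv, Ring.inverse_eq_inv]
      exact inv_ne_zero hH.det_pos.ne'
    refine wdvv_of_ricci ((hessian Φ x)⁻¹) (fun i j k => pd3 Φ i j k x) ha hc1 hc2 ?_
      (fun i k hik => hcon x hx i k hik) i j k l
    intro h0
    apply hdet
    rw [Matrix.det_fin_three, ha 1 0, ha 2 0, ha 2 1]
    linear_combination h0
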